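/- Let G = G_1 ∘ G_2 (removing leaves f_1, f_2 whose neighbours v_1, v_2 have degree ≥ 3 and identifying v_1 = v_2 = v). If both G_1 and G_2 satisfy c_{G_i}(S) = |S| + 1 for all cut sets S, and for i = 1, 2 there exists u_i ∈ N_{G_i}(v) with deg_{G_i}(u_i) = 2, then G satisfies c_G(S) = |S| + 1 for all cut sets S of G. -/

import Mathlib

open SimpleGraph Finset

/-- Number of connected components of the subgraph of `G` induced on the complement of `S`. -/
noncomputable def numComp {V : Type*} [Fintype V] (G : SimpleGraph V) (S : Finset V) : ℕ :=
  Nat.card (G.induce ((↑S : Set V)ᶜ)).ConnectedComponent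

/-- `S` is a cut set of `G`. -/
def IsCutSet {V : Type*} [Fintype V] [DecidableEq V] (G : SimpleGraph V) (S : Finset V) : Prop :=
  S = ∅ ∨ (S ≠ ∅ ∧ ∀ i ∈ S, numComp G (S.erase i) < numComp G S)

/-- The combinatorial condition equivalent to unmixedness of the binomial edge ideal. -/
def Unmixed {V : Type*} [Fintype V] [DecidableEq V] (G : SimpleGraph V) : Prop :=
  ∀ S : Finset V, IsCutSet G S → numComp G S = S.card + 1

/-- Vertex set of `(G₁,f₁) ∘ (G₂,f₂)`: the leaves `f₁, f₂` are removed and `v₁` is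
identified with `v₂` (the copy of `v₂` is dropped, `v₁` playing the role of `v`). -/
abbrev GlueV {V₁ V₂ : Type*} (f1 : V₁) (f2 v2 : V₂) : Type _ :=
  {x : V₁ // x ≠ f1} ⊕ {x : V₂ // x ≠ f2 ∧ x ≠ v2}

/-- The graph `(G₁,f₁) ∘ (G₂,f₂)`. -/
def glueGraph {V₁ V₂ : Type*} (Γ1 : SimpleGraph V₁) (Γ2 : SimpleGraph V₂)
    (f1 v1 : V₁) (f2 v2 : V₂) : SimpleGraph (GlueV f1 f2 v2) :=
  SimpleGraph.fromRel (fun x y =>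
    match x, y with
    | Sum.inl a, Sum.inl b => Γ1.Adj a.1 b.1
    | Sum.inr a, Sum.inr b => Γ2.Adj a.1 b.1
    | Sum.inl a, Sum.inr b => a.1 = v1 ∧ Γ2.Adj v2 b.1
    | Sum.inr a, Sum.inl b => b.1 = v1 ∧ Γ2.Adj v2 a.1)

/-- The subset of `V₁` corresponding to a set of vertices of the glued graph
(`S ∩ V(G₁)`, with `v` read as `v₁`). -/
def leftPart {V₁ V₂ : Type*} [DecidableEq V₁] {f1 : V₁} {f2 v2 : V₂}
    (S : Finset (GlueV f1 f2 v2)) : Finset V₁ :=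
  S.biUnion (fun z => match z with
    | Sum.inl a => {a.1}
    | Sum.inr _ => (∅ : Finset V₁))

/-- The subset of `V₂` corresponding to a set of vertices of the glued graph
(`S ∩ V(G₂)`, with `v` read as `v₂`). -/
def rightPart {V₁ V₂ : Type*} [DecidableEq V₁] [DecidableEq V₂] (v1 : V₁) {f1 : V₁}
    {f2 v2 : V₂} (S : Finset (GlueV f1 f2 v2)) : Finset V₂ :=
  S.biUnion (fun z => match z with
    | Sum.inl a => if a.1 = v1 then {v2} else (∅ : Finset V₂)
    | Sum.inr b => {b.1})

/-- The subset of the glued graph corresponding to a subset `S1 ⊆ V₁`. -/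
def liftLeft {V₁ V₂ : Type*} [DecidableEq V₁] [DecidableEq V₂] {f1 : V₁} {f2 v2 : V₂}
    (S1 : Finset V₁) : Finset (GlueV f1 f2 v2) :=
  S1.biUnion (fun a => if h : a ≠ f1 then {Sum.inl ⟨a, h⟩} else ∅)

/-- The subset of the glued graph corresponding to a subset `S2 ⊆ V₂`
(`v₂` being read as `v`, i.e. as `v₁`). -/
def liftRight {V₁ V₂ : Type*} [DecidableEq V₁] [DecidableEq V₂] {f1 v1 : V₁} {f2 v2 : V₂}
    (hne1 : v1 ≠ f1) (S2 : Finset V₂) : Finset (GlueV f1 f2 v2) :=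
  S2.biUnion (fun b =>
    if h : b ≠ f2 ∧ b ≠ v2 then {Sum.inr ⟨b, h⟩}
    else if b = v2 then {Sum.inl ⟨v1, hne1⟩} else ∅)

namespace Aux

set_option linter.unusedSectionVars false

lemma walk_const {V : Type*} {β : Sort*} {G : SimpleGraph V} {f : V → β}
    (h : ∀ v w, G.Adj v w → f v = f w) : ∀ {v w : V}, G.Walk v w → f v = f w := by
  intro v w p
  induction p with
  | nil => rfl
  | cons a p ih => exact (h _ _ a).trans ih

/-- lift a function constant on edges to connected components -/
def ccLift {V : Type*} {β : Sort*} {G : SimpleGraph V} (f : V → β)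
    (h : ∀ v w, G.Adj v w → f v = f w) : G.ConnectedComponent → β :=
  SimpleGraph.ConnectedComponent.lift f (fun _ _ p _ => walk_const h p)

@[simp] lemma ccLift_mk {V : Type*} {β : Sort*} {G : SimpleGraph V} (f : V → β) (h) (v : V) :
    ccLift f h (G.connectedComponentMk v) = f v := rfl

/-- hom between induced subgraphs from inclusion -/
def inclHom {V : Type*} (G : SimpleGraph V) {s t : Set V} (hst : s ⊆ t) :
    G.induce s →g G.induce t where
  toFun x := ⟨x.1, hst x.2⟩
  map_rel' := by intro a b hab; exact hab

@[simp] lemma inclHom_apply {V : Type*} (G : SimpleGraph V) {s t : Set V} (hst : s ⊆ t) (x : s) :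
    (inclHom G hst x : V) = (x : V) := rfl

lemma mk_ne_of_isolated {W : Type*} {K : SimpleGraph W} {a b : W} (h : ∀ z, ¬ K.Adj a z)
    (hne : a ≠ b) : K.connectedComponentMk a ≠ K.connectedComponentMk b := by
  intro hc
  rw [SimpleGraph.ConnectedComponent.eq] at hc
  obtain ⟨p⟩ := hc
  cases p with
  | nil => exact hne rfl
  | cons h' _ => exact h _ h'

variable {V : Type*} [Fintype V] [DecidableEq V]

lemma mem_complS {S : Finset V} {x : V} : x ∈ ((↑S : Set V)ᶜ) ↔ x ∉ S := by simp

lemma compl_subset_compl_erase (S : Finset V) (u : V) :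
    ((↑S : Set V)ᶜ) ⊆ ((↑(S.erase u) : Set V)ᶜ) := by
  intro x hx
  rw [Set.mem_compl_iff] at *
  intro h
  exact hx (by exact_mod_cast Finset.mem_of_mem_erase (by exact_mod_cast h))

lemma le_numComp_erase (G : SimpleGraph V) (S : Finset V) {u : V} (hu : u ∈ S)
    (hnbr : ∀ y z, G.Adj u y → G.Adj u z → y ∉ S → z ∉ S → y = z) :
    numComp G S ≤ numComp G (S.erase u) := by
  classical
  have hsub := compl_subset_compl_erase S u
  set φ : (G.induce ((↑S : Set V)ᶜ)).ConnectedComponent →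
      (G.induce ((↑(S.erase u) : Set V)ᶜ)).ConnectedComponent :=
    SimpleGraph.ConnectedComponent.map (inclHom G hsub) with hφ
  have hx_or : ∀ {x : V}, x ∈ ((↑(S.erase u) : Set V)ᶜ) → x ∉ S ∨ x = u := by
    intro x hx
    by_cases h : x = u
    · exact Or.inr h
    · left; intro hxS; exact (mem_complS.mp hx) (Finset.mem_erase.mpr ⟨h, hxS⟩)
  suffices hinj : Function.Injective φ by
    exact Nat.card_le_card_of_injective φ hinj
  by_cases hex : ∃ y, y ∉ S ∧ G.Adj u y
  · obtain ⟨y0, hy0S, hy0a⟩ := hex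
    set g : ((↑(S.erase u) : Set V)ᶜ : Set V) → (G.induce ((↑S : Set V)ᶜ)).ConnectedComponent :=
      fun x => if hx : (x : V) ∉ S
        then (G.induce ((↑S : Set V)ᶜ)).connectedComponentMk ⟨x, mem_complS.mpr hx⟩
        else (G.induce ((↑S : Set V)ᶜ)).connectedComponentMk ⟨y0, mem_complS.mpr hy0S⟩ with hg
    have hgadj : ∀ a b, (G.induce ((↑(S.erase u) : Set V)ᶜ)).Adj a b → g a = g b := by
      intro a b hab
      have hab' : G.Adj a.1 b.1 := hab
      by_cases haS : (a : V) ∉ S <;> by_cases hbS : (b : V) ∉ S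
      · simp only [hg, dif_pos haS, dif_pos hbS]
        exact SimpleGraph.ConnectedComponent.eq.mpr (SimpleGraph.Adj.reachable hab')
      · have hbu : (b : V) = u := by rcases hx_or b.2 with h | h; exact absurd h hbS; exact h
        have hau : G.Adj u a.1 := by have := hab'.symm; rwa [hbu] at this
        have he : y0 = a.1 := hnbr _ _ hy0a hau hy0S haS
        simp only [hg, dif_pos haS, dif_neg hbS]
        exact congrArg _ (Subtype.ext he.symm)
      · have hau : (a : V) = u := by rcases hx_or a.2 with h | h; exact absurd h haS; exact h
        have hbu : G.Adj u b.1 := by have := hab'; rwa [hau] at this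
        have he : y0 = b.1 := hnbr _ _ hy0a hbu hy0S hbS
        simp only [hg, dif_neg haS, dif_pos hbS]
        exact congrArg _ (Subtype.ext he)
      · exfalso
        have hau : (a : V) = u := by rcases hx_or a.2 with h | h; exact absurd h haS; exact h
        have hbu : (b : V) = u := by rcases hx_or b.2 with h | h; exact absurd h hbS; exact h
        exact G.irrefl (by rw [hau, hbu] at hab'; exact hab')
    set ψ := ccLift g hgadj with hψ
    have h1 : ∀ c, ψ (φ c) = c := by
      refine SimpleGraph.ConnectedComponent.ind ?_
      intro x
      have hxS : (x : V) ∉ S := mem_complS.mp x.2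
      simp only [hφ, hψ, SimpleGraph.ConnectedComponent.map_mk, ccLift_mk, hg, inclHom_apply]
      exact dif_pos hxS
    intro c d hcd
    have h2 := congrArg ψ hcd
    rwa [h1 c, h1 d] at h2
  · push_neg at hex
    set g : ((↑(S.erase u) : Set V)ᶜ : Set V) →
        Option ((G.induce ((↑S : Set V)ᶜ)).ConnectedComponent) :=
      fun x => if hx : (x : V) ∉ S
        then some ((G.induce ((↑S : Set V)ᶜ)).connectedComponentMk ⟨x, mem_complS.mpr hx⟩)
        else none with hg
    have hgadj : ∀ a b, (G.induce ((↑(S.erase u) : Set V)ᶜ)).Adj a b → g a = g b := by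
      intro a b hab
      have hab' : G.Adj a.1 b.1 := hab
      by_cases haS : (a : V) ∉ S <;> by_cases hbS : (b : V) ∉ S
      · simp only [hg, dif_pos haS, dif_pos hbS, Option.some.injEq]
        exact SimpleGraph.ConnectedComponent.eq.mpr (SimpleGraph.Adj.reachable hab')
      · exfalso
        have hbu : (b : V) = u := by rcases hx_or b.2 with h | h; exact absurd h hbS; exact h
        exact hex a.1 haS (by have := hab'.symm; rwa [hbu] at this)
      · exfalso
        have hau : (a : V) = u := by rcases hx_or a.2 with h | h; exact absurd h haS; exact h
        exact hex b.1 hbS (by have := hab'; rwa [hau] at this)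
      · exfalso
        have hau : (a : V) = u := by rcases hx_or a.2 with h | h; exact absurd h haS; exact h
        have hbu : (b : V) = u := by rcases hx_or b.2 with h | h; exact absurd h hbS; exact h
        exact G.irrefl (by rw [hau, hbu] at hab'; exact hab')
    set ψ := ccLift g hgadj with hψ
    have h1 : ∀ c, ψ (φ c) = some c := by
      refine SimpleGraph.ConnectedComponent.ind ?_
      intro x
      have hxS : (x : V) ∉ S := mem_complS.mp x.2
      simp only [hφ, hψ, SimpleGraph.ConnectedComponent.map_mk, ccLift_mk, hg, inclHom_apply]
      exact dif_pos hxS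
    intro c d hcd
    have h2 := congrArg ψ hcd
    rw [h1 c, h1 d] at h2
    exact Option.some.inj h2
lemma numComp_erase_lt (G : SimpleGraph V) (S : Finset V) {u x y : V} (hu : u ∈ S)
    (hx : x ∉ S) (hy : y ∉ S) (hax : G.Adj u x) (hay : G.Adj u y)
    (hnr : (G.induce ((↑S : Set V)ᶜ)).connectedComponentMk ⟨x, mem_complS.mpr hx⟩ ≠
      (G.induce ((↑S : Set V)ᶜ)).connectedComponentMk ⟨y, mem_complS.mpr hy⟩) :
    numComp G (S.erase u) < numComp G S := by
  classical
  have hsub := compl_subset_compl_erase S u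
  have humem : u ∈ ((↑(S.erase u) : Set V)ᶜ) := by
    rw [mem_complS]; simp
  set ρ : (G.induce ((↑S : Set V)ᶜ)).ConnectedComponent →
      (G.induce ((↑(S.erase u) : Set V)ᶜ)).ConnectedComponent :=
    SimpleGraph.ConnectedComponent.map (inclHom G hsub) with hρ
  have hsurj : Function.Surjective ρ := by
    refine SimpleGraph.ConnectedComponent.ind ?_
    intro z
    by_cases hz : (z : V) ∈ S
    · have hzu : (z : V) = u := by
        by_contra h
        exact (mem_complS.mp z.2) (Finset.mem_erase.mpr ⟨h, hz⟩)
      refine ⟨(G.induce ((↑S : Set V)ᶜ)).connectedComponentMk ⟨x, mem_complS.mpr hx⟩, ?_⟩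
      simp only [hρ, SimpleGraph.ConnectedComponent.map_mk]
      rw [SimpleGraph.ConnectedComponent.eq]
      have hadj : (G.induce ((↑(S.erase u) : Set V)ᶜ)).Adj
          ((inclHom G hsub) ⟨x, mem_complS.mpr hx⟩) z := by
        show G.Adj x (z : V)
        rw [hzu]; exact hax.symm
      exact hadj.reachable
    · refine ⟨(G.induce ((↑S : Set V)ᶜ)).connectedComponentMk ⟨(z : V), mem_complS.mpr hz⟩, ?_⟩
      simp only [hρ, SimpleGraph.ConnectedComponent.map_mk]
      rfl
  have hninj : ¬ Function.Injective ρ := by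
    intro hinj
    apply hnr
    apply hinj
    simp only [hρ, SimpleGraph.ConnectedComponent.map_mk]
    rw [SimpleGraph.ConnectedComponent.eq]
    have h1 : (G.induce ((↑(S.erase u) : Set V)ᶜ)).Adj
        ((inclHom G hsub) ⟨x, mem_complS.mpr hx⟩) ⟨u, humem⟩ := hax.symm
    have h2 : (G.induce ((↑(S.erase u) : Set V)ᶜ)).Adj ⟨u, humem⟩
        ((inclHom G hsub) ⟨y, mem_complS.mpr hy⟩) := hay
    exact h1.reachable.trans h2.reachable
  have hle : numComp G (S.erase u) ≤ numComp G S :=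
    Nat.card_le_card_of_surjective ρ hsurj
  rcases lt_or_eq_of_le hle with h | h
  · exact h
  · exfalso
    letI : Fintype ((G.induce ((↑S : Set V)ᶜ)).ConnectedComponent) := Fintype.ofFinite _
    letI : Fintype ((G.induce ((↑(S.erase u) : Set V)ᶜ)).ConnectedComponent) := Fintype.ofFinite _
    have hcard : Fintype.card ((G.induce ((↑S : Set V)ᶜ)).ConnectedComponent) =
        Fintype.card ((G.induce ((↑(S.erase u) : Set V)ᶜ)).ConnectedComponent) := by
      have := h
      unfold numComp at this
      rw [Nat.card_eq_fintype_card, Nat.card_eq_fintype_card] at this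
      exact this.symm
    exact hninj ((Fintype.bijective_iff_surjective_and_card ρ).mpr ⟨hsurj, hcard⟩).1

/-- adding a vertex `f` (whose unique neighbour `w` survives) to `S` keeps count. -/
lemma numComp_insert_of_nbr (G : SimpleGraph V) (S : Finset V) {f w : V}
    (hf : f ∉ S) (hw : w ∉ S) (hadj : G.Adj f w) (huniq : ∀ z, G.Adj f z → z = w) :
    numComp G (insert f S) = numComp G S := by
  classical
  have hwf : w ≠ f := fun h => G.irrefl (h ▸ hadj)
  have hsub : ((↑(insert f S) : Set V)ᶜ) ⊆ ((↑S : Set V)ᶜ) := by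
    intro z hz
    rw [mem_complS] at *
    intro h; exact hz (Finset.mem_insert_of_mem h)
  have hwmem : w ∈ ((↑(insert f S) : Set V)ᶜ) := by
    rw [mem_complS, Finset.mem_insert]; push_neg; exact ⟨hwf, hw⟩
  set φ : (G.induce ((↑(insert f S) : Set V)ᶜ)).ConnectedComponent →
      (G.induce ((↑S : Set V)ᶜ)).ConnectedComponent :=
    SimpleGraph.ConnectedComponent.map (inclHom G hsub) with hφ
  set g : ((↑S : Set V)ᶜ : Set V) → (G.induce ((↑(insert f S) : Set V)ᶜ)).ConnectedComponent :=
    fun x => if hx : (x : V) = f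
      then (G.induce ((↑(insert f S) : Set V)ᶜ)).connectedComponentMk ⟨w, hwmem⟩
      else (G.induce ((↑(insert f S) : Set V)ᶜ)).connectedComponentMk
        ⟨x, by rw [mem_complS, Finset.mem_insert]; push_neg;
               exact ⟨hx, mem_complS.mp x.2⟩⟩ with hg
  have hgadj : ∀ a b, (G.induce ((↑S : Set V)ᶜ)).Adj a b → g a = g b := by
    intro a b hab
    have hab' : G.Adj a.1 b.1 := hab
    by_cases haf : (a : V) = f <;> by_cases hbf : (b : V) = f
    · exact absurd (show G.Adj f f by rw [haf, hbf] at hab'; exact hab') (G.irrefl)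
    · have : (b : V) = w := huniq b.1 (by rwa [haf] at hab')
      simp only [hg, dif_pos haf, dif_neg hbf]
      exact congrArg _ (Subtype.ext this.symm)
    · have : (a : V) = w := huniq a.1 (by have := hab'.symm; rwa [hbf] at this)
      simp only [hg, dif_neg haf, dif_pos hbf]
      exact congrArg _ (Subtype.ext this)
    · simp only [hg, dif_neg haf, dif_neg hbf]
      rw [SimpleGraph.ConnectedComponent.eq]
      exact SimpleGraph.Adj.reachable hab'
  set ψ := ccLift g hgadj with hψ
  have h1 : ∀ c, ψ (φ c) = c := by
    refine SimpleGraph.ConnectedComponent.ind ?_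
    intro z
    have hzf : (z : V) ≠ f := by
      intro h
      apply (mem_complS.mp z.2); rw [h]; exact Finset.mem_insert_self f S
    simp only [hφ, hψ, SimpleGraph.ConnectedComponent.map_mk, ccLift_mk, hg, inclHom_apply]
    exact dif_neg hzf
  have h2 : ∀ c, φ (ψ c) = c := by
    refine SimpleGraph.ConnectedComponent.ind ?_
    intro z
    by_cases hzf : (z : V) = f
    · simp only [hφ, hψ, ccLift_mk, hg]
      rw [dif_pos hzf]
      simp only [SimpleGraph.ConnectedComponent.map_mk]
      rw [SimpleGraph.ConnectedComponent.eq]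
      have hadj2 : (G.induce ((↑S : Set V)ᶜ)).Adj ((inclHom G hsub) ⟨w, hwmem⟩) z := by
        show G.Adj w (z : V)
        rw [hzf]; exact hadj.symm
      exact hadj2.reachable
    · simp only [hφ, hψ, ccLift_mk, hg]
      rw [dif_neg hzf]
      simp only [SimpleGraph.ConnectedComponent.map_mk]
      rfl
  unfold numComp
  exact Nat.card_eq_of_bijective φ ⟨fun c d hcd => by rw [← h1 c, ← h1 d, hcd],
    fun c => ⟨ψ c, h2 c⟩⟩

/-- adding a vertex `f` whose unique neighbour `w` is already in `S` drops count by one. -/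
lemma numComp_insert_of_nbr_mem (G : SimpleGraph V) (S : Finset V) {f w : V}
    (hf : f ∉ S) (hw : w ∈ S) (huniq : ∀ z, G.Adj f z → z = w) :
    numComp G S = numComp G (insert f S) + 1 := by
  classical
  have hsub : ((↑(insert f S) : Set V)ᶜ) ⊆ ((↑S : Set V)ᶜ) := by
    intro z hz
    rw [mem_complS] at *
    intro h; exact hz (Finset.mem_insert_of_mem h)
  set g : ((↑S : Set V)ᶜ : Set V) →
      Option ((G.induce ((↑(insert f S) : Set V)ᶜ)).ConnectedComponent) :=
    fun x => if hx : (x : V) = f then none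
      else some ((G.induce ((↑(insert f S) : Set V)ᶜ)).connectedComponentMk
        ⟨x, by rw [mem_complS, Finset.mem_insert]; push_neg;
               exact ⟨hx, mem_complS.mp x.2⟩⟩) with hg
  have hgadj : ∀ a b, (G.induce ((↑S : Set V)ᶜ)).Adj a b → g a = g b := by
    intro a b hab
    have hab' : G.Adj a.1 b.1 := hab
    by_cases haf : (a : V) = f <;> by_cases hbf : (b : V) = f
    · exact absurd (show G.Adj f f by rw [haf, hbf] at hab'; exact hab') (G.irrefl)
    · exfalso
      have : (b : V) = w := huniq b.1 (by rwa [haf] at hab')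
      exact (mem_complS.mp b.2) (by rw [this]; exact hw)
    · exfalso
      have : (a : V) = w := huniq a.1 (by have := hab'.symm; rwa [hbf] at this)
      exact (mem_complS.mp a.2) (by rw [this]; exact hw)
    · simp only [hg, dif_neg haf, dif_neg hbf, Option.some.injEq]
      rw [SimpleGraph.ConnectedComponent.eq]
      exact SimpleGraph.Adj.reachable hab'
  set ψ := ccLift g hgadj with hψ
  have hfmem : f ∈ ((↑S : Set V)ᶜ) := mem_complS.mpr hf
  set θ : Option ((G.induce ((↑(insert f S) : Set V)ᶜ)).ConnectedComponent) →
      (G.induce ((↑S : Set V)ᶜ)).ConnectedComponent :=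
    fun c => match c with
      | none => (G.induce ((↑S : Set V)ᶜ)).connectedComponentMk ⟨f, hfmem⟩
      | some c => SimpleGraph.ConnectedComponent.map (inclHom G hsub) c with hθ
  have h1 : ∀ c, θ (ψ c) = c := by
    refine SimpleGraph.ConnectedComponent.ind ?_
    intro z
    by_cases hzf : (z : V) = f
    · simp only [hψ, ccLift_mk, hg]
      rw [dif_pos hzf]
      simp only [hθ]
      exact congrArg _ (Subtype.ext hzf.symm)
    · simp only [hψ, ccLift_mk, hg]
      rw [dif_neg hzf]
      simp only [hθ, SimpleGraph.ConnectedComponent.map_mk]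
      rfl
  have h2 : ∀ c, ψ (θ c) = c := by
    intro c
    match c with
    | none =>
      simp only [hθ, hψ, ccLift_mk, hg]
      simp
    | some c =>
      refine SimpleGraph.ConnectedComponent.ind (fun z => ?_) c
      have hzf : (z : V) ≠ f := by
        intro h
        apply (mem_complS.mp z.2); rw [h]; exact Finset.mem_insert_self f S
      simp only [hθ, hψ, SimpleGraph.ConnectedComponent.map_mk, ccLift_mk, hg, inclHom_apply]
      exact dif_neg hzf
  have hbij : Function.Bijective θ :=
    ⟨fun c d hcd => by rw [← h2 c, ← h2 d, hcd], fun c => ⟨ψ c, h1 c⟩⟩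
  have hb := Nat.card_eq_of_bijective θ hbij
  have hopt : Nat.card (Option ((G.induce ((↑(insert f S) : Set V)ᶜ)).ConnectedComponent)) =
      Nat.card ((G.induce ((↑(insert f S) : Set V)ᶜ)).ConnectedComponent) + 1 := by
    have e : Option ((G.induce ((↑(insert f S) : Set V)ᶜ)).ConnectedComponent) ≃
        ((G.induce ((↑(insert f S) : Set V)ᶜ)).ConnectedComponent) ⊕ PUnit.{1} :=
      Equiv.optionEquivSumPUnit _
    rw [Nat.card_congr e, Nat.card_sum]
    simp
  unfold numComp
  rw [← hb, hopt]

lemma deg_one_unique {V : Type*} [Fintype V] [DecidableEq V] {G : SimpleGraph V} [DecidableRel G.Adj] {f v : V}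
    (h1 : G.degree f = 1) (hfv : G.Adj f v) : ∀ y, G.Adj f y → y = v := by
  intro y hy
  have hv : v ∈ G.neighborFinset f := by simpa using hfv
  have hy' : y ∈ G.neighborFinset f := by simpa using hy
  exact Finset.card_le_one.mp (le_of_eq h1) y hy' v hv

lemma deg_two_unique {V : Type*} [Fintype V] [DecidableEq V] {G : SimpleGraph V} [DecidableRel G.Adj] {u v : V}
    (h2 : G.degree u = 2) (hv : G.Adj u v) :
    ∀ y z, G.Adj u y → G.Adj u z → y ≠ v → z ≠ v → y = z := by
  intro y z hy hz hyv hzv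
  obtain ⟨a, b, hab, hs⟩ := Finset.card_eq_two.mp h2
  have hvm : v ∈ G.neighborFinset u := by simpa using hv
  have hym : y ∈ G.neighborFinset u := by simpa using hy
  have hzm : z ∈ G.neighborFinset u := by simpa using hz
  rw [hs, Finset.mem_insert, Finset.mem_singleton] at hvm hym hzm
  rcases hvm with rfl | rfl
  · rcases hym with rfl | rfl
    · exact absurd rfl hyv
    · rcases hzm with rfl | rfl
      · exact absurd rfl hzv
      · rfl
  · rcases hym with rfl | rfl
    · rcases hzm with rfl | rfl
      · rfl
      · exact absurd rfl hzv
    · exact absurd rfl hyv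

section Glue

variable {V₁ V₂ : Type*} [Fintype V₁] [DecidableEq V₁] [Fintype V₂] [DecidableEq V₂]
variable {Γ1 : SimpleGraph V₁} {Γ2 : SimpleGraph V₂}
variable {f1 v1 : V₁} {f2 v2 : V₂}

lemma glue_adj_inl_inl {a b : {x : V₁ // x ≠ f1}} :
    (glueGraph Γ1 Γ2 f1 v1 f2 v2).Adj (Sum.inl a) (Sum.inl b) ↔ Γ1.Adj a.1 b.1 := by
  show (SimpleGraph.fromRel _).Adj _ _ ↔ _
  rw [SimpleGraph.fromRel_adj]
  constructor
  · rintro ⟨-, h | h⟩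
    · exact h
    · exact h.symm
  · intro h
    refine ⟨fun he => ?_, Or.inl h⟩
    · rw [Sum.inl.injEq] at he
      exact Γ1.irrefl (by rw [he] at h; exact h)

lemma glue_adj_inr_inr {a b : {x : V₂ // x ≠ f2 ∧ x ≠ v2}} :
    (glueGraph Γ1 Γ2 f1 v1 f2 v2).Adj (Sum.inr a) (Sum.inr b) ↔ Γ2.Adj a.1 b.1 := by
  show (SimpleGraph.fromRel _).Adj _ _ ↔ _
  rw [SimpleGraph.fromRel_adj]
  constructor
  · rintro ⟨-, h | h⟩
    · exact h
    · exact h.symm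
  · intro h
    refine ⟨fun he => ?_, Or.inl h⟩
    · rw [Sum.inr.injEq] at he
      exact Γ2.irrefl (by rw [he] at h; exact h)

lemma glue_adj_inl_inr {a : {x : V₁ // x ≠ f1}} {b : {x : V₂ // x ≠ f2 ∧ x ≠ v2}} :
    (glueGraph Γ1 Γ2 f1 v1 f2 v2).Adj (Sum.inl a) (Sum.inr b) ↔ a.1 = v1 ∧ Γ2.Adj v2 b.1 := by
  show (SimpleGraph.fromRel _).Adj _ _ ↔ _
  rw [SimpleGraph.fromRel_adj]
  constructor
  · rintro ⟨-, h | h⟩ <;> exact h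
  · intro h
    exact ⟨by simp, Or.inl h⟩

lemma glue_adj_inr_inl {a : {x : V₂ // x ≠ f2 ∧ x ≠ v2}} {b : {x : V₁ // x ≠ f1}} :
    (glueGraph Γ1 Γ2 f1 v1 f2 v2).Adj (Sum.inr a) (Sum.inl b) ↔ b.1 = v1 ∧ Γ2.Adj v2 a.1 := by
  show (SimpleGraph.fromRel _).Adj _ _ ↔ _
  rw [SimpleGraph.fromRel_adj]
  constructor
  · rintro ⟨-, h | h⟩ <;> exact h
  · intro h
    exact ⟨by simp, Or.inl h⟩

lemma mem_leftPart_iff {S : Finset (GlueV f1 f2 v2)} {a : {x : V₁ // x ≠ f1}} :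
    a.1 ∈ leftPart S ↔ Sum.inl a ∈ S := by
  unfold leftPart
  rw [Finset.mem_biUnion]
  constructor
  · rintro ⟨z, hz, hm⟩
    rcases z with c | c
    · have hm' : a.1 ∈ ({c.1} : Finset V₁) := hm
      have : a = c := Subtype.ext (Finset.mem_singleton.mp hm')
      rw [this]; exact hz
    · have hm' : a.1 ∈ (∅ : Finset V₁) := hm
      simp at hm'
  · intro hz
    exact ⟨Sum.inl a, hz, by exact Finset.mem_singleton.mpr rfl⟩

lemma f1_not_mem_leftPart {S : Finset (GlueV f1 f2 v2)} : f1 ∉ leftPart S := by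
  unfold leftPart
  rw [Finset.mem_biUnion]
  rintro ⟨z, hz, hm⟩
  rcases z with c | c
  · exact c.2 (Finset.mem_singleton.mp hm).symm
  · exact absurd hm (by simp)

lemma mem_rightPart_iff {S : Finset (GlueV f1 f2 v2)} {b : {x : V₂ // x ≠ f2 ∧ x ≠ v2}} :
    b.1 ∈ rightPart v1 S ↔ Sum.inr b ∈ S := by
  unfold rightPart
  rw [Finset.mem_biUnion]
  constructor
  · rintro ⟨z, hz, hm⟩
    rcases z with c | c
    · by_cases hc : c.1 = v1
      · have hm' : b.1 ∈ ({v2} : Finset V₂) := by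
          have : b.1 ∈ (if c.1 = v1 then ({v2} : Finset V₂) else ∅) := hm
          rwa [if_pos hc] at this
        exact absurd (Finset.mem_singleton.mp hm') b.2.2
      · have hm' : b.1 ∈ (∅ : Finset V₂) := by
          have : b.1 ∈ (if c.1 = v1 then ({v2} : Finset V₂) else ∅) := hm
          rwa [if_neg hc] at this
        simp at hm'
    · have hm' : b.1 ∈ ({c.1} : Finset V₂) := hm
      have : b = c := Subtype.ext (Finset.mem_singleton.mp hm')
      rw [this]; exact hz
  · intro hz
    exact ⟨Sum.inr b, hz, by exact Finset.mem_singleton.mpr rfl⟩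

lemma f2_not_mem_rightPart (hne2 : v2 ≠ f2) {S : Finset (GlueV f1 f2 v2)} :
    f2 ∉ rightPart v1 S := by
  unfold rightPart
  rw [Finset.mem_biUnion]
  rintro ⟨z, hz, hm⟩
  rcases z with c | c
  · by_cases hc : c.1 = v1
    · have hm' : f2 ∈ ({v2} : Finset V₂) := by
        have : f2 ∈ (if c.1 = v1 then ({v2} : Finset V₂) else ∅) := hm
        rwa [if_pos hc] at this
      exact hne2 (Finset.mem_singleton.mp hm').symm
    · have hm' : f2 ∈ (∅ : Finset V₂) := by
        have : f2 ∈ (if c.1 = v1 then ({v2} : Finset V₂) else ∅) := hm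
        rwa [if_neg hc] at this
      simp at hm'
  · exact c.2.1 (Finset.mem_singleton.mp hm).symm

lemma v2_mem_rightPart_iff (hne1 : v1 ≠ f1) {S : Finset (GlueV f1 f2 v2)} :
    v2 ∈ rightPart v1 S ↔ Sum.inl ⟨v1, hne1⟩ ∈ S := by
  unfold rightPart
  rw [Finset.mem_biUnion]
  constructor
  · rintro ⟨z, hz, hm⟩
    rcases z with c | c
    · by_cases hc : c.1 = v1
      · have : (⟨v1, hne1⟩ : {x : V₁ // x ≠ f1}) = c := Subtype.ext hc.symm
        rw [this]; exact hz
      · have hm' : v2 ∈ (∅ : Finset V₂) := by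
          have : v2 ∈ (if c.1 = v1 then ({v2} : Finset V₂) else ∅) := hm
          rwa [if_neg hc] at this
        simp at hm'
    · exact absurd (Finset.mem_singleton.mp hm).symm c.2.2
  · intro hz
    refine ⟨Sum.inl ⟨v1, hne1⟩, hz, ?_⟩
    have : v2 ∈ (if v1 = v1 then ({v2} : Finset V₂) else ∅) := by
      rw [if_pos rfl]; exact Finset.mem_singleton.mpr rfl
    exact this

end Glue

section Glue2

variable {V₁ V₂ : Type*} [Fintype V₁] [DecidableEq V₁] [Fintype V₂] [DecidableEq V₂]
variable {Γ1 : SimpleGraph V₁} {Γ2 : SimpleGraph V₂}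
variable {f1 v1 : V₁} {f2 v2 : V₂}

lemma leftPart_erase_inl {S : Finset (GlueV f1 f2 v2)} (a : {x : V₁ // x ≠ f1}) :
    leftPart (S.erase (Sum.inl a)) = (leftPart S).erase a.1 := by
  ext x
  by_cases hx : x = f1
  · subst hx
    simp only [Finset.mem_erase]
    constructor
    · intro h; exact absurd h f1_not_mem_leftPart
    · rintro ⟨-, h⟩; exact absurd h f1_not_mem_leftPart
  · rw [Finset.mem_erase]
    have h1 := mem_leftPart_iff (S := S.erase (Sum.inl a)) (a := ⟨x, hx⟩)
    have h2 := mem_leftPart_iff (S := S) (a := ⟨x, hx⟩)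
    rw [h1, h2, Finset.mem_erase]
    constructor
    · rintro ⟨hne, hm⟩
      refine ⟨fun he => hne ?_, hm⟩
      subst he
      rfl
    · rintro ⟨hne, hm⟩
      refine ⟨fun he => hne ?_, hm⟩
      rw [Sum.inl.injEq] at he
      exact congrArg Subtype.val he

lemma leftPart_erase_inr {S : Finset (GlueV f1 f2 v2)} (b : {x : V₂ // x ≠ f2 ∧ x ≠ v2}) :
    leftPart (S.erase (Sum.inr b)) = leftPart S := by
  ext x
  by_cases hx : x = f1
  · subst hx
    constructor
    · intro h; exact absurd h f1_not_mem_leftPart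
    · intro h; exact absurd h f1_not_mem_leftPart
  · rw [mem_leftPart_iff (a := ⟨x, hx⟩), mem_leftPart_iff (a := ⟨x, hx⟩), Finset.mem_erase]
    constructor
    · rintro ⟨-, hm⟩; exact hm
    · intro hm; exact ⟨by simp, hm⟩

lemma rightPart_erase_inr (hne1 : v1 ≠ f1) (hne2 : v2 ≠ f2) {S : Finset (GlueV f1 f2 v2)}
    (b : {x : V₂ // x ≠ f2 ∧ x ≠ v2}) :
    rightPart v1 (S.erase (Sum.inr b)) = (rightPart v1 S).erase b.1 := by
  ext y
  by_cases hy2 : y = f2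
  · subst hy2
    rw [Finset.mem_erase]
    constructor
    · intro h; exact absurd h (f2_not_mem_rightPart hne2)
    · rintro ⟨-, h⟩; exact absurd h (f2_not_mem_rightPart hne2)
  by_cases hyv : y = v2
  · subst hyv
    rw [Finset.mem_erase, v2_mem_rightPart_iff hne1, v2_mem_rightPart_iff hne1,
      Finset.mem_erase]
    constructor
    · rintro ⟨-, hm⟩
      exact ⟨fun h => b.2.2 h.symm, hm⟩
    · rintro ⟨-, hm⟩
      exact ⟨by simp, hm⟩
  · rw [Finset.mem_erase, mem_rightPart_iff (b := ⟨y, hy2, hyv⟩),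
      mem_rightPart_iff (b := ⟨y, hy2, hyv⟩), Finset.mem_erase]
    constructor
    · rintro ⟨hne, hm⟩
      refine ⟨fun he => hne ?_, hm⟩
      subst he; rfl
    · rintro ⟨hne, hm⟩
      refine ⟨fun he => hne ?_, hm⟩
      rw [Sum.inr.injEq] at he
      exact congrArg Subtype.val he

lemma rightPart_erase_inl_ne (hne1 : v1 ≠ f1) (hne2 : v2 ≠ f2) {S : Finset (GlueV f1 f2 v2)}
    {a : {x : V₁ // x ≠ f1}} (ha : a.1 ≠ v1) :
    rightPart v1 (S.erase (Sum.inl a)) = rightPart v1 S := by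
  ext y
  by_cases hy2 : y = f2
  · subst hy2
    constructor
    · intro h; exact absurd h (f2_not_mem_rightPart hne2)
    · intro h; exact absurd h (f2_not_mem_rightPart hne2)
  by_cases hyv : y = v2
  · subst hyv
    rw [v2_mem_rightPart_iff hne1, v2_mem_rightPart_iff hne1, Finset.mem_erase]
    constructor
    · rintro ⟨-, hm⟩; exact hm
    · intro hm
      refine ⟨fun he => ha ?_, hm⟩
      rw [Sum.inl.injEq] at he
      rw [← he]
  · rw [mem_rightPart_iff (b := ⟨y, hy2, hyv⟩), mem_rightPart_iff (b := ⟨y, hy2, hyv⟩),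
      Finset.mem_erase]
    constructor
    · rintro ⟨-, hm⟩; exact hm
    · intro hm; exact ⟨by simp, hm⟩

lemma rightPart_erase_inl_v (hne1 : v1 ≠ f1) (hne2 : v2 ≠ f2) {S : Finset (GlueV f1 f2 v2)} :
    rightPart v1 (S.erase (Sum.inl ⟨v1, hne1⟩)) = (rightPart v1 S).erase v2 := by
  ext y
  by_cases hy2 : y = f2
  · subst hy2
    rw [Finset.mem_erase]
    constructor
    · intro h; exact absurd h (f2_not_mem_rightPart hne2)
    · rintro ⟨-, h⟩; exact absurd h (f2_not_mem_rightPart hne2)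
  by_cases hyv : y = v2
  · subst hyv
    rw [Finset.mem_erase, v2_mem_rightPart_iff hne1, Finset.mem_erase]
    constructor
    · rintro ⟨hne, -⟩; exact absurd rfl hne
    · rintro ⟨hne, -⟩; exact absurd rfl hne
  · rw [Finset.mem_erase, mem_rightPart_iff (b := ⟨y, hy2, hyv⟩),
      mem_rightPart_iff (b := ⟨y, hy2, hyv⟩), Finset.mem_erase]
    constructor
    · rintro ⟨-, hm⟩; exact ⟨hyv, hm⟩
    · rintro ⟨-, hm⟩; exact ⟨by simp, hm⟩

lemma leftPart_insert_inl {S : Finset (GlueV f1 f2 v2)} (a : {x : V₁ // x ≠ f1}) :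
    leftPart (insert (Sum.inl a) S) = insert a.1 (leftPart S) := by
  ext x
  rw [Finset.mem_insert]
  by_cases hx : x = f1
  · subst hx
    constructor
    · intro h; exact absurd h f1_not_mem_leftPart
    · rintro (h | h)
      · exact absurd h.symm a.2
      · exact absurd h f1_not_mem_leftPart
  · rw [mem_leftPart_iff (a := ⟨x, hx⟩), mem_leftPart_iff (a := ⟨x, hx⟩), Finset.mem_insert]
    constructor
    · rintro (h | h)
      · rw [Sum.inl.injEq] at h
        exact Or.inl (congrArg Subtype.val h)
      · exact Or.inr h
    · rintro (h | h)
      · exact Or.inl (by rw [Sum.inl.injEq]; exact Subtype.ext h)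
      · exact Or.inr h

lemma leftPart_insert_inr {S : Finset (GlueV f1 f2 v2)} (b : {x : V₂ // x ≠ f2 ∧ x ≠ v2}) :
    leftPart (insert (Sum.inr b) S) = leftPart S := by
  ext x
  by_cases hx : x = f1
  · subst hx
    constructor
    · intro h; exact absurd h f1_not_mem_leftPart
    · intro h; exact absurd h f1_not_mem_leftPart
  · rw [mem_leftPart_iff (a := ⟨x, hx⟩), mem_leftPart_iff (a := ⟨x, hx⟩), Finset.mem_insert]
    constructor
    · rintro (h | h)
      · exact absurd h (by simp)
      · exact h
    · exact Or.inr

lemma rightPart_insert_inr (hne1 : v1 ≠ f1) (hne2 : v2 ≠ f2) {S : Finset (GlueV f1 f2 v2)}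
    (b : {x : V₂ // x ≠ f2 ∧ x ≠ v2}) :
    rightPart v1 (insert (Sum.inr b) S) = insert b.1 (rightPart v1 S) := by
  ext y
  rw [Finset.mem_insert]
  by_cases hy2 : y = f2
  · subst hy2
    constructor
    · intro h; exact absurd h (f2_not_mem_rightPart hne2)
    · rintro (h | h)
      · exact absurd h.symm b.2.1
      · exact absurd h (f2_not_mem_rightPart hne2)
  by_cases hyv : y = v2
  · subst hyv
    rw [v2_mem_rightPart_iff hne1, v2_mem_rightPart_iff hne1, Finset.mem_insert]
    constructor
    · rintro (h | h)
      · exact absurd h (by simp)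
      · exact Or.inr h
    · rintro (h | h)
      · exact absurd h.symm b.2.2
      · exact Or.inr h
  · rw [mem_rightPart_iff (b := ⟨y, hy2, hyv⟩), mem_rightPart_iff (b := ⟨y, hy2, hyv⟩),
      Finset.mem_insert]
    constructor
    · rintro (h | h)
      · rw [Sum.inr.injEq] at h
        exact Or.inl (congrArg Subtype.val h)
      · exact Or.inr h
    · rintro (h | h)
      · exact Or.inl (by rw [Sum.inr.injEq]; exact Subtype.ext h)
      · exact Or.inr h

lemma rightPart_insert_inl_v (hne1 : v1 ≠ f1) (hne2 : v2 ≠ f2) {S : Finset (GlueV f1 f2 v2)} :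
    rightPart v1 (insert (Sum.inl ⟨v1, hne1⟩) S) = insert v2 (rightPart v1 S) := by
  ext y
  rw [Finset.mem_insert]
  by_cases hy2 : y = f2
  · subst hy2
    constructor
    · intro h; exact absurd h (f2_not_mem_rightPart hne2)
    · rintro (h | h)
      · exact absurd h.symm hne2
      · exact absurd h (f2_not_mem_rightPart hne2)
  by_cases hyv : y = v2
  · subst hyv
    rw [v2_mem_rightPart_iff hne1, v2_mem_rightPart_iff hne1, Finset.mem_insert]
    constructor
    · rintro (h | h)
      · exact Or.inl rfl
      · exact Or.inr h
    · rintro (h | h)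
      · exact Or.inl rfl
      · exact Or.inr h
  · rw [mem_rightPart_iff (b := ⟨y, hy2, hyv⟩), mem_rightPart_iff (b := ⟨y, hy2, hyv⟩),
      Finset.mem_insert]
    constructor
    · rintro (h | h)
      · exact absurd h (by simp)
      · exact Or.inr h
    · rintro (h | h)
      · exact absurd h hyv
      · exact Or.inr h

lemma rightPart_insert_inl_ne (hne1 : v1 ≠ f1) (hne2 : v2 ≠ f2) {S : Finset (GlueV f1 f2 v2)}
    {a : {x : V₁ // x ≠ f1}} (ha : a.1 ≠ v1) :
    rightPart v1 (insert (Sum.inl a) S) = rightPart v1 S := by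
  ext y
  by_cases hy2 : y = f2
  · subst hy2
    constructor
    · intro h; exact absurd h (f2_not_mem_rightPart hne2)
    · intro h; exact absurd h (f2_not_mem_rightPart hne2)
  by_cases hyv : y = v2
  · subst hyv
    rw [v2_mem_rightPart_iff hne1, v2_mem_rightPart_iff hne1, Finset.mem_insert]
    constructor
    · rintro (h | h)
      · exfalso
        rw [Sum.inl.injEq] at h
        exact ha (congrArg Subtype.val h.symm)
      · exact h
    · exact Or.inr
  · rw [mem_rightPart_iff (b := ⟨y, hy2, hyv⟩), mem_rightPart_iff (b := ⟨y, hy2, hyv⟩),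
      Finset.mem_insert]
    constructor
    · rintro (h | h)
      · exact absurd h (by simp)
      · exact h
    · exact Or.inr

lemma card_parts (hne1 : v1 ≠ f1) (hne2 : v2 ≠ f2) (S : Finset (GlueV f1 f2 v2)) :
    (leftPart S).card + (rightPart v1 S).card =
      S.card + (if Sum.inl ⟨v1, hne1⟩ ∈ S then 1 else 0) := by
  classical
  refine Finset.induction_on S ?_ ?_
  · simp [leftPart, rightPart]
  · intro z S hz ih
    rcases z with a | b
    · have hL := leftPart_insert_inl (S := S) a
      have haL : a.1 ∉ leftPart S := fun h => hz (mem_leftPart_iff.mp h)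
      by_cases hav : a.1 = v1
      · have hav' : a = ⟨v1, hne1⟩ := Subtype.ext hav
        subst hav'
        have hR := rightPart_insert_inl_v (S := S) hne1 hne2
        have hvR : v2 ∉ rightPart v1 S := by
          rw [v2_mem_rightPart_iff hne1]
          exact hz
        rw [hL, hR, Finset.card_insert_of_notMem haL, Finset.card_insert_of_notMem hvR,
          Finset.card_insert_of_notMem hz]
        rw [if_pos (Finset.mem_insert_self _ _)]
        rw [if_neg hz] at ih
        omega
      · have hR := rightPart_insert_inl_ne (S := S) hne1 hne2 hav
        rw [hL, hR, Finset.card_insert_of_notMem haL, Finset.card_insert_of_notMem hz]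
        have hcond : (Sum.inl ⟨v1, hne1⟩ ∈ insert (Sum.inl a) S) ↔ (Sum.inl ⟨v1, hne1⟩ ∈ S) := by
          rw [Finset.mem_insert]
          constructor
          · rintro (h | h)
            · exfalso; rw [Sum.inl.injEq] at h
              exact hav (congrArg Subtype.val h.symm)
            · exact h
          · exact Or.inr
        rw [if_congr hcond rfl rfl]
        omega
    · have hL := leftPart_insert_inr (S := S) b
      have hR := rightPart_insert_inr (S := S) hne1 hne2 b
      have hbR : b.1 ∉ rightPart v1 S := fun h => hz (mem_rightPart_iff.mp h)
      rw [hL, hR, Finset.card_insert_of_notMem hbR, Finset.card_insert_of_notMem hz]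
      have hcond : (Sum.inl ⟨v1, hne1⟩ ∈ insert (Sum.inr b) S) ↔ (Sum.inl ⟨v1, hne1⟩ ∈ S) := by
        rw [Finset.mem_insert]
        constructor
        · rintro (h | h)
          · exact absurd h (by simp)
          · exact h
        · exact Or.inr
      rw [if_congr hcond rfl rfl]
      omega

end Glue2

section GlueCount

variable {V₁ V₂ : Type*} [Fintype V₁] [DecidableEq V₁] [Fintype V₂] [DecidableEq V₂]
variable {Γ1 : SimpleGraph V₁} {Γ2 : SimpleGraph V₂}
variable {f1 v1 : V₁} {f2 v2 : V₂}

lemma glue_count_in (hne1 : v1 ≠ f1) (hne2 : v2 ≠ f2) (S : Finset (GlueV f1 f2 v2))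
    (hv : Sum.inl ⟨v1, hne1⟩ ∈ S) :
    numComp (glueGraph Γ1 Γ2 f1 v1 f2 v2) S =
      numComp Γ1 (insert f1 (leftPart S)) + numComp Γ2 (insert f2 (rightPart v1 S)) := by
  classical
  set GG := glueGraph Γ1 Γ2 f1 v1 f2 v2 with hGG
  set Ω : Set (GlueV f1 f2 v2) := ((↑S : Set (GlueV f1 f2 v2))ᶜ) with hΩ
  set Ω₁ : Set V₁ := ((↑(insert f1 (leftPart S)) : Set V₁)ᶜ) with hΩ₁
  set Ω₂ : Set V₂ := ((↑(insert f2 (rightPart v1 S)) : Set V₂)ᶜ) with hΩ₂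
  have hΩ₁mem : ∀ x : V₁, x ∈ Ω₁ ↔ (x ≠ f1 ∧ x ∉ leftPart S) := by
    intro x; rw [hΩ₁]; simp [not_or]
  have hΩ₂mem : ∀ y : V₂, y ∈ Ω₂ ↔ (y ≠ f2 ∧ y ∉ rightPart v1 S) := by
    intro y; rw [hΩ₂]; simp [not_or]
  have hΩmem : ∀ z : GlueV f1 f2 v2, z ∈ Ω ↔ z ∉ S := by
    intro z; rw [hΩ]; simp
  -- the left inclusion
  set ιL : ↥Ω₁ → ↥Ω := fun x =>
    ⟨Sum.inl ⟨x.1, ((hΩ₁mem x.1).mp x.2).1⟩, by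
      rw [hΩmem]
      intro hS
      exact ((hΩ₁mem x.1).mp x.2).2 (mem_leftPart_iff.mpr hS)⟩ with hιL
  have hιLadj : ∀ x y, (Γ1.induce Ω₁).Adj x y → (GG.induce Ω).Adj (ιL x) (ιL y) := by
    intro x y hxy
    exact (glue_adj_inl_inl (Γ1 := Γ1) (Γ2 := Γ2) (f1 := f1) (v1 := v1) (f2 := f2) (v2 := v2)).mpr hxy
  -- the right inclusion (v₂ cannot occur in Ω₂ since v ∈ S)
  have hv2R : v2 ∈ rightPart v1 S := (v2_mem_rightPart_iff hne1).mpr hv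
  set ιR : ↥Ω₂ → ↥Ω := fun y =>
    ⟨Sum.inr ⟨y.1, ⟨((hΩ₂mem y.1).mp y.2).1,
        fun h => ((hΩ₂mem y.1).mp y.2).2 (by rw [h]; exact hv2R)⟩⟩, by
      rw [hΩmem]
      intro hS
      exact ((hΩ₂mem y.1).mp y.2).2 (mem_rightPart_iff.mpr hS)⟩ with hιR
  have hιRadj : ∀ x y, (Γ2.induce Ω₂).Adj x y → (GG.induce Ω).Adj (ιR x) (ιR y) := by
    intro x y hxy
    exact (glue_adj_inr_inr (Γ1 := Γ1) (Γ2 := Γ2) (f1 := f1) (v1 := v1) (f2 := f2) (v2 := v2)).mpr hxy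
  -- the splitting map on vertices
  set g : ↥Ω →
      (Γ1.induce Ω₁).ConnectedComponent ⊕ (Γ2.induce Ω₂).ConnectedComponent := fun x =>
    match x with
    | ⟨Sum.inl a, hx⟩ => Sum.inl ((Γ1.induce Ω₁).connectedComponentMk
        ⟨a.1, (hΩ₁mem a.1).mpr ⟨a.2, fun h => ((hΩmem _).mp hx) (mem_leftPart_iff.mp h)⟩⟩)
    | ⟨Sum.inr b, hx⟩ => Sum.inr ((Γ2.induce Ω₂).connectedComponentMk
        ⟨b.1, (hΩ₂mem b.1).mpr ⟨b.2.1, fun h => ((hΩmem _).mp hx) (mem_rightPart_iff.mp h)⟩⟩)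
    with hg
  have hgadj : ∀ x y, (GG.induce Ω).Adj x y → g x = g y := by
    rintro ⟨x, hx⟩ ⟨y, hy⟩ hxy
    have hxy' : GG.Adj x y := hxy
    rcases x with a | a <;> rcases y with b | b
    · have h := glue_adj_inl_inl.mp hxy'
      exact congrArg Sum.inl (SimpleGraph.ConnectedComponent.eq.mpr
        (SimpleGraph.Adj.reachable (by exact h)))
    · exfalso
      have h := glue_adj_inl_inr.mp hxy'
      have : (Sum.inl a : GlueV f1 f2 v2) = Sum.inl (⟨v1, hne1⟩ : {x : V₁ // x ≠ f1}) := by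
        rw [Sum.inl.injEq]; exact Subtype.ext h.1
      exact ((hΩmem _).mp hx) (by rw [this]; exact hv)
    · exfalso
      have h := glue_adj_inr_inl.mp hxy'
      have : (Sum.inl b : GlueV f1 f2 v2) = Sum.inl (⟨v1, hne1⟩ : {x : V₁ // x ≠ f1}) := by
        rw [Sum.inl.injEq]; exact Subtype.ext h.1
      exact ((hΩmem _).mp hy) (by rw [this]; exact hv)
    · have h := glue_adj_inr_inr.mp hxy'
      exact congrArg Sum.inr (SimpleGraph.ConnectedComponent.eq.mpr
        (SimpleGraph.Adj.reachable (by exact h)))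
  set ψ := ccLift g hgadj with hψ
  set φ1 : (Γ1.induce Ω₁).ConnectedComponent → (GG.induce Ω).ConnectedComponent :=
    ccLift (fun x => (GG.induce Ω).connectedComponentMk (ιL x))
      (fun x y h => SimpleGraph.ConnectedComponent.eq.mpr
        (SimpleGraph.Adj.reachable (hιLadj x y h))) with hφ1
  set φ2 : (Γ2.induce Ω₂).ConnectedComponent → (GG.induce Ω).ConnectedComponent :=
    ccLift (fun x => (GG.induce Ω).connectedComponentMk (ιR x))
      (fun x y h => SimpleGraph.ConnectedComponent.eq.mpr
        (SimpleGraph.Adj.reachable (hιRadj x y h))) with hφ2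
  set φ := Sum.elim φ1 φ2 with hφ
  have h1 : ∀ t, ψ (φ t) = t := by
    rintro (c | c)
    · refine SimpleGraph.ConnectedComponent.ind (fun x => ?_) c
      simp only [hφ, Sum.elim_inl, hφ1, ccLift_mk, hψ, hιL, hg]
    · refine SimpleGraph.ConnectedComponent.ind (fun x => ?_) c
      simp only [hφ, Sum.elim_inr, hφ2, ccLift_mk, hψ, hιR, hg]
  have h2 : ∀ c, φ (ψ c) = c := by
    intro c
    refine SimpleGraph.ConnectedComponent.ind ?_ c
    rintro ⟨a | b, hx⟩
    · simp only [hψ, ccLift_mk, hg, hφ, Sum.elim_inl, hφ1, ccLift_mk]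
      rfl
    · simp only [hψ, ccLift_mk, hg, hφ, Sum.elim_inr, hφ2, ccLift_mk]
      rfl
  have hbij : Function.Bijective φ :=
    ⟨fun c d hcd => by rw [← h1 c, ← h1 d, hcd], fun c => ⟨ψ c, h2 c⟩⟩
  have hcards := Nat.card_eq_of_bijective φ hbij
  unfold numComp
  rw [← hcards, Nat.card_sum]

end GlueCount

section GlueCountOut

variable {V₁ V₂ : Type*} [Fintype V₁] [DecidableEq V₁] [Fintype V₂] [DecidableEq V₂]
variable {Γ1 : SimpleGraph V₁} {Γ2 : SimpleGraph V₂}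
variable {f1 v1 : V₁} {f2 v2 : V₂}

lemma glue_count_out (hne1 : v1 ≠ f1) (hne2 : v2 ≠ f2) (S : Finset (GlueV f1 f2 v2))
    (hv : Sum.inl ⟨v1, hne1⟩ ∉ S) :
    numComp (glueGraph Γ1 Γ2 f1 v1 f2 v2) S + 1 =
      numComp Γ1 (insert f1 (leftPart S)) + numComp Γ2 (insert f2 (rightPart v1 S)) := by
  classical
  set GG := glueGraph Γ1 Γ2 f1 v1 f2 v2 with hGG
  set Ω : Set (GlueV f1 f2 v2) := ((↑S : Set (GlueV f1 f2 v2))ᶜ) with hΩ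
  set Ω₁ : Set V₁ := ((↑(insert f1 (leftPart S)) : Set V₁)ᶜ) with hΩ₁
  set Ω₂ : Set V₂ := ((↑(insert f2 (rightPart v1 S)) : Set V₂)ᶜ) with hΩ₂
  have hΩ₁mem : ∀ x : V₁, x ∈ Ω₁ ↔ (x ≠ f1 ∧ x ∉ leftPart S) := by
    intro x; rw [hΩ₁]; simp [not_or]
  have hΩ₂mem : ∀ y : V₂, y ∈ Ω₂ ↔ (y ≠ f2 ∧ y ∉ rightPart v1 S) := by
    intro y; rw [hΩ₂]; simp [not_or]
  have hΩmem : ∀ z : GlueV f1 f2 v2, z ∈ Ω ↔ z ∉ S := by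
    intro z; rw [hΩ]; simp
  have hv2R : v2 ∉ rightPart v1 S := fun h => hv ((v2_mem_rightPart_iff hne1).mp h)
  have hv1L : v1 ∉ leftPart S := fun h => hv (mem_leftPart_iff.mp h)
  have hv2Ω : v2 ∈ Ω₂ := (hΩ₂mem v2).mpr ⟨hne2, hv2R⟩
  have hv1Ω : v1 ∈ Ω₁ := (hΩ₁mem v1).mpr ⟨hne1, hv1L⟩
  set K : (Γ2.induce Ω₂).ConnectedComponent :=
    (Γ2.induce Ω₂).connectedComponentMk ⟨v2, hv2Ω⟩ with hK
  -- the left inclusion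
  set ιL : ↥Ω₁ → ↥Ω := fun x =>
    ⟨Sum.inl ⟨x.1, ((hΩ₁mem x.1).mp x.2).1⟩, by
      rw [hΩmem]
      intro hS
      exact ((hΩ₁mem x.1).mp x.2).2 (mem_leftPart_iff.mpr hS)⟩ with hιL
  have hιLadj : ∀ x y, (Γ1.induce Ω₁).Adj x y → (GG.induce Ω).Adj (ιL x) (ιL y) := by
    intro x y hxy
    exact (glue_adj_inl_inl (Γ1 := Γ1) (Γ2 := Γ2) (f1 := f1) (v1 := v1) (f2 := f2) (v2 := v2)).mpr hxy
  -- the right inclusion, with v2 ↦ v1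
  set ιR : ↥Ω₂ → ↥Ω := fun y =>
    if h : (y : V₂) = v2 then
      ⟨Sum.inl ⟨v1, hne1⟩, (hΩmem _).mpr hv⟩
    else
      ⟨Sum.inr ⟨y.1, ⟨((hΩ₂mem y.1).mp y.2).1, h⟩⟩, by
        rw [hΩmem]
        intro hS
        exact ((hΩ₂mem y.1).mp y.2).2 (mem_rightPart_iff.mpr hS)⟩ with hιR
  have hιRadj : ∀ x y, (Γ2.induce Ω₂).Adj x y → (GG.induce Ω).Adj (ιR x) (ιR y) := by
    intro x y hxy
    have hxy' : Γ2.Adj x.1 y.1 := hxy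
    by_cases hx2 : (x : V₂) = v2 <;> by_cases hy2 : (y : V₂) = v2
    · exact absurd (show Γ2.Adj v2 v2 by rw [hx2, hy2] at hxy'; exact hxy') Γ2.irrefl
    · simp only [hιR]
      rw [dif_pos hx2, dif_neg hy2]
      exact (glue_adj_inl_inr (Γ1 := Γ1) (Γ2 := Γ2) (f1 := f1) (v1 := v1) (f2 := f2)
        (v2 := v2)).mpr ⟨rfl, by have h' := hxy'; rw [hx2] at h'; exact h'⟩
    · simp only [hιR]
      rw [dif_neg hx2, dif_pos hy2]
      exact (glue_adj_inr_inl (Γ1 := Γ1) (Γ2 := Γ2) (f1 := f1) (v1 := v1) (f2 := f2)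
        (v2 := v2)).mpr ⟨rfl, by have h' := hxy'.symm; rw [hy2] at h'; exact h'⟩
    · simp only [hιR]
      rw [dif_neg hx2, dif_neg hy2]
      exact (glue_adj_inr_inr (Γ1 := Γ1) (Γ2 := Γ2) (f1 := f1) (v1 := v1) (f2 := f2)
        (v2 := v2)).mpr hxy'
  -- an actual graph hom for transporting reachability
  set ιRhom : (Γ2.induce Ω₂) →g (GG.induce Ω) := ⟨ιR, fun h => hιRadj _ _ h⟩ with hιRhom
  -- the splitting map on vertices
  set g : ↥Ω → (Γ1.induce Ω₁).ConnectedComponent ⊕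
      {c : (Γ2.induce Ω₂).ConnectedComponent // c ≠ K} := fun x =>
    match x with
    | ⟨Sum.inl a, hx⟩ => Sum.inl ((Γ1.induce Ω₁).connectedComponentMk
        ⟨a.1, (hΩ₁mem a.1).mpr ⟨a.2, fun h => ((hΩmem _).mp hx) (mem_leftPart_iff.mp h)⟩⟩)
    | ⟨Sum.inr b, hx⟩ =>
      if hc : (Γ2.induce Ω₂).connectedComponentMk
          ⟨b.1, (hΩ₂mem b.1).mpr ⟨b.2.1, fun h => ((hΩmem _).mp hx) (mem_rightPart_iff.mp h)⟩⟩ = K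
      then Sum.inl ((Γ1.induce Ω₁).connectedComponentMk ⟨v1, hv1Ω⟩)
      else Sum.inr ⟨(Γ2.induce Ω₂).connectedComponentMk
        ⟨b.1, (hΩ₂mem b.1).mpr ⟨b.2.1, fun h => ((hΩmem _).mp hx) (mem_rightPart_iff.mp h)⟩⟩, hc⟩
    with hg
  have hgadj : ∀ x y, (GG.induce Ω).Adj x y → g x = g y := by
    rintro ⟨x, hx⟩ ⟨y, hy⟩ hxy
    have hxy' : GG.Adj x y := hxy
    rcases x with a | a <;> rcases y with b | b
    · have h := glue_adj_inl_inl.mp hxy'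
      exact congrArg Sum.inl (SimpleGraph.ConnectedComponent.eq.mpr
        (SimpleGraph.Adj.reachable (by exact h)))
    · -- inl a – inr b : a.1 = v1 and Γ2.Adj v2 b.1; so the component of b is K
      have h := glue_adj_inl_inr.mp hxy'
      have hbmem : b.1 ∈ Ω₂ := (hΩ₂mem b.1).mpr
        ⟨b.2.1, fun hh => ((hΩmem _).mp hy) (mem_rightPart_iff.mp hh)⟩
      have hcK : (Γ2.induce Ω₂).connectedComponentMk ⟨b.1, hbmem⟩ = K := by
        rw [hK, SimpleGraph.ConnectedComponent.eq]
        exact (SimpleGraph.Adj.reachable (by exact h.2.symm : (Γ2.induce Ω₂).Adj ⟨b.1, hbmem⟩ ⟨v2, hv2Ω⟩))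
      show _ = (if hc : _ then _ else _)
      rw [dif_pos hcK]
      exact congrArg Sum.inl (congrArg _ (Subtype.ext h.1))
    · have h := glue_adj_inr_inl.mp hxy'
      have hamem : a.1 ∈ Ω₂ := (hΩ₂mem a.1).mpr
        ⟨a.2.1, fun hh => ((hΩmem _).mp hx) (mem_rightPart_iff.mp hh)⟩
      have hcK : (Γ2.induce Ω₂).connectedComponentMk ⟨a.1, hamem⟩ = K := by
        rw [hK, SimpleGraph.ConnectedComponent.eq]
        exact (SimpleGraph.Adj.reachable (by exact h.2.symm : (Γ2.induce Ω₂).Adj ⟨a.1, hamem⟩ ⟨v2, hv2Ω⟩))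
      show (if hc : _ then _ else _) = _
      rw [dif_pos hcK]
      exact congrArg Sum.inl (congrArg _ (Subtype.ext h.1.symm))
    · have h := glue_adj_inr_inr.mp hxy'
      have hamem : a.1 ∈ Ω₂ := (hΩ₂mem a.1).mpr
        ⟨a.2.1, fun hh => ((hΩmem _).mp hx) (mem_rightPart_iff.mp hh)⟩
      have hbmem : b.1 ∈ Ω₂ := (hΩ₂mem b.1).mpr
        ⟨b.2.1, fun hh => ((hΩmem _).mp hy) (mem_rightPart_iff.mp hh)⟩
      have hab : (Γ2.induce Ω₂).connectedComponentMk ⟨a.1, hamem⟩ =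
          (Γ2.induce Ω₂).connectedComponentMk ⟨b.1, hbmem⟩ :=
        SimpleGraph.ConnectedComponent.eq.mpr (SimpleGraph.Adj.reachable (by exact h))
      by_cases hcK : (Γ2.induce Ω₂).connectedComponentMk ⟨a.1, hamem⟩ = K
      · show (if hc : _ then _ else _) = (if hc : _ then _ else _)
        rw [dif_pos hcK, dif_pos (hab ▸ hcK)]
      · show (if hc : _ then _ else _) = (if hc : _ then _ else _)
        rw [dif_neg hcK, dif_neg (hab ▸ hcK)]
        exact congrArg Sum.inr (Subtype.ext hab)
  set ψ := ccLift g hgadj with hψ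
  set φ1 : (Γ1.induce Ω₁).ConnectedComponent → (GG.induce Ω).ConnectedComponent :=
    ccLift (fun x => (GG.induce Ω).connectedComponentMk (ιL x))
      (fun x y h => SimpleGraph.ConnectedComponent.eq.mpr
        (SimpleGraph.Adj.reachable (hιLadj x y h))) with hφ1
  set φ2 : (Γ2.induce Ω₂).ConnectedComponent → (GG.induce Ω).ConnectedComponent :=
    ccLift (fun x => (GG.induce Ω).connectedComponentMk (ιR x))
      (fun x y h => SimpleGraph.ConnectedComponent.eq.mpr
        (SimpleGraph.Adj.reachable (hιRadj x y h))) with hφ2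
  set φ : (Γ1.induce Ω₁).ConnectedComponent ⊕
      {c : (Γ2.induce Ω₂).ConnectedComponent // c ≠ K} → (GG.induce Ω).ConnectedComponent :=
    Sum.elim φ1 (fun c => φ2 c.1) with hφ
  have h1 : ∀ t, ψ (φ t) = t := by
    rintro (c | ⟨c, hc⟩)
    · refine SimpleGraph.ConnectedComponent.ind (fun x => ?_) c
      simp only [hφ, Sum.elim_inl, hφ1, ccLift_mk, hψ, hιL, hg]
    · revert hc
      refine SimpleGraph.ConnectedComponent.ind (fun y => ?_) c
      intro hc
      have hyv : (y : V₂) ≠ v2 := by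
        intro h
        exact hc (congrArg _ (Subtype.ext h))
      simp only [hφ, Sum.elim_inr, hφ2, ccLift_mk, hψ, hιR]
      rw [dif_neg hyv]
      simp only [hg]
      rw [dif_neg (by exact hc : ((Γ2.induce Ω₂).connectedComponentMk ⟨(y : V₂), _⟩ ≠ K))]
  have h2 : ∀ c, φ (ψ c) = c := by
    intro c
    refine SimpleGraph.ConnectedComponent.ind ?_ c
    rintro ⟨a | b, hx⟩
    · simp only [hψ, ccLift_mk, hg, hφ, Sum.elim_inl, hφ1, ccLift_mk]
      rfl
    · have hbmem : b.1 ∈ Ω₂ := (hΩ₂mem b.1).mpr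
        ⟨b.2.1, fun hh => ((hΩmem _).mp hx) (mem_rightPart_iff.mp hh)⟩
      by_cases hcK : (Γ2.induce Ω₂).connectedComponentMk ⟨b.1, hbmem⟩ = K
      · simp only [hψ, ccLift_mk, hg]
        rw [dif_pos hcK]
        simp only [hφ, Sum.elim_inl, hφ1, ccLift_mk]
        -- need : mk (ιL ⟨v1⟩) = mk ⟨inr b⟩ ; use reachability transported along ιRhom
        have hreach : (GG.induce Ω).Reachable (ιRhom ⟨b.1, hbmem⟩) (ιRhom ⟨v2, hv2Ω⟩) :=
          SimpleGraph.Reachable.map ιRhom (SimpleGraph.ConnectedComponent.eq.mp hcK)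
        have hval1 : ιRhom ⟨b.1, hbmem⟩ = ⟨Sum.inr b, hx⟩ := by
          simp only [hιRhom]
          show ιR _ = _
          simp [hιR, b.2.2]
        have hval2 : ιRhom ⟨v2, hv2Ω⟩ = ⟨Sum.inl ⟨v1, hne1⟩, (hΩmem _).mpr hv⟩ := by
          simp only [hιRhom]
          show ιR _ = _
          simp [hιR]
        rw [hval1, hval2] at hreach
        rw [SimpleGraph.ConnectedComponent.eq]
        exact hreach.symm
      · simp only [hψ, ccLift_mk, hg]
        rw [dif_neg hcK]
        simp only [hφ, Sum.elim_inr, hφ2, ccLift_mk]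
        simp [hιR, b.2.2]
  have hbij : Function.Bijective φ :=
    ⟨fun c d hcd => by rw [← h1 c, ← h1 d, hcd], fun c => ⟨ψ c, h2 c⟩⟩
  have hcards := Nat.card_eq_of_bijective φ hbij
  have hsub : Nat.card ((Γ2.induce Ω₂).ConnectedComponent) =
      Nat.card {c : (Γ2.induce Ω₂).ConnectedComponent // c ≠ K} + 1 := by
    have e : Option {c : (Γ2.induce Ω₂).ConnectedComponent // c ≠ K} ≃
        (Γ2.induce Ω₂).ConnectedComponent := Equiv.optionSubtypeNe K
    rw [← Nat.card_congr e]
    have e2 : Option {c : (Γ2.induce Ω₂).ConnectedComponent // c ≠ K} ≃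
        {c : (Γ2.induce Ω₂).ConnectedComponent // c ≠ K} ⊕ PUnit.{1} :=
      Equiv.optionEquivSumPUnit _
    rw [Nat.card_congr e2, Nat.card_sum]
    simp
  unfold numComp
  rw [← hcards, Nat.card_sum, hsub]
  ring

end GlueCountOut

lemma erase_v_lt {V : Type*} [Fintype V] [DecidableEq V] (G : SimpleGraph V)
    {T : Finset V} {f v u : V} (hfT : f ∉ T) (hvT : v ∈ T) (huT : u ∉ T)
    (hadjvf : G.Adj v f) (hadjvu : G.Adj v u) (hfu : f ≠ u)
    (hfuniq : ∀ y, G.Adj f y → y = v) :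
    numComp G (T.erase v) < numComp G T := by
  refine numComp_erase_lt G T hvT hfT huT hadjvf hadjvu ?_
  refine mk_ne_of_isolated ?_ ?_
  · rintro ⟨z, hz⟩ hadj
    have hzv : z = v := hfuniq z hadj
    subst hzv
    exact (mem_complS.mp hz) hvT
  · intro h
    exact hfu (congrArg Subtype.val h)

end Aux

open Aux

theorem stmt12 {V₁ V₂ : Type*} [Fintype V₁] [DecidableEq V₁] [Fintype V₂] [DecidableEq V₂]
    (Γ1 : SimpleGraph V₁) (Γ2 : SimpleGraph V₂)
    [DecidableRel Γ1.Adj] [DecidableRel Γ2.Adj]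
    (hconn1 : Γ1.Connected) (hconn2 : Γ2.Connected)
    (f1 v1 : V₁) (f2 v2 : V₂)
    (hl1 : Γ1.degree f1 = 1) (hl2 : Γ2.degree f2 = 1)
    (ha1 : Γ1.Adj f1 v1) (ha2 : Γ2.Adj f2 v2)
    (hd1 : 3 ≤ Γ1.degree v1) (hd2 : 3 ≤ Γ2.degree v2)
    (hne1 : v1 ≠ f1) (hne2 : v2 ≠ f2)
    (hunmixed1 : Unmixed Γ1) (hunmixed2 : Unmixed Γ2)
    (hu1 : ∃ u1, Γ1.Adj v1 u1 ∧ Γ1.degree u1 = 2)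
    (hu2 : ∃ u2, Γ2.Adj v2 u2 ∧ Γ2.degree u2 = 2) :
    Unmixed (glueGraph Γ1 Γ2 f1 v1 f2 v2) := by
  classical
  intro S hcut
  set GG := glueGraph Γ1 Γ2 f1 v1 f2 v2 with hGG
  have huniq1 : ∀ y, Γ1.Adj f1 y → y = v1 := deg_one_unique hl1 ha1
  have huniq2 : ∀ y, Γ2.Adj f2 y → y = v2 := deg_one_unique hl2 ha2
  obtain ⟨u1, hu1adj, hu1deg⟩ := hu1
  obtain ⟨u2, hu2adj, hu2deg⟩ := hu2
  have hu1v : u1 ≠ v1 := fun h => Γ1.irrefl (by rw [h] at hu1adj; exact hu1adj)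
  have hu2v : u2 ≠ v2 := fun h => Γ2.irrefl (by rw [h] at hu2adj; exact hu2adj)
  have hu1f : u1 ≠ f1 := by
    intro h
    rw [h, hl1] at hu1deg
    norm_num at hu1deg
  have hu2f : u2 ≠ f2 := by
    intro h
    rw [h, hl2] at hu2deg
    norm_num at hu2deg
  have hf1T : f1 ∉ leftPart S := f1_not_mem_leftPart
  have hf2T : f2 ∉ rightPart v1 S := f2_not_mem_rightPart hne2
  by_cases hvS : (Sum.inl ⟨v1, hne1⟩ : GlueV f1 f2 v2) ∈ S
  · -- v ∈ S
    have hv1L : v1 ∈ leftPart S := mem_leftPart_iff (a := ⟨v1, hne1⟩).mpr hvS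
    have hv2R : v2 ∈ rightPart v1 S := (v2_mem_rightPart_iff hne1).mpr hvS
    have hS0 : S ≠ ∅ := Finset.ne_empty_of_mem hvS
    have hdec : ∀ i ∈ S, numComp GG (S.erase i) < numComp GG S := by
      rcases hcut with h | ⟨-, h⟩
      · exact absurd h hS0
      · exact h
    -- u1 is not in S
    have hu1S : (Sum.inl ⟨u1, hu1f⟩ : GlueV f1 f2 v2) ∉ S := by
      intro hmem
      have hone : ∀ w, GG.Adj (Sum.inl ⟨u1, hu1f⟩) w → w ∉ S →
          ∃ c : {x : V₁ // x ≠ f1}, w = Sum.inl c ∧ Γ1.Adj u1 c.1 ∧ c.1 ≠ v1 := by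
        rintro (c | c) hadj hwS
        · refine ⟨c, rfl, glue_adj_inl_inl.mp hadj, fun hcv => ?_⟩
          have : (Sum.inl c : GlueV f1 f2 v2) = Sum.inl ⟨v1, hne1⟩ := by
            rw [Sum.inl.injEq]; exact Subtype.ext hcv
          exact hwS (by rw [this]; exact hvS)
        · exact absurd (glue_adj_inl_inr.mp hadj).1 hu1v
      have hle := le_numComp_erase GG S hmem ?_
      · exact absurd (hdec _ hmem) (not_lt.mpr hle)
      · intro y z hy hz hyS hzS
        obtain ⟨cy, rfl, hcy, hcyv⟩ := hone y hy hyS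
        obtain ⟨cz, rfl, hcz, hczv⟩ := hone z hz hzS
        rw [Sum.inl.injEq]
        exact Subtype.ext (deg_two_unique hu1deg hu1adj.symm cy.1 cz.1 hcy hcz hcyv hczv)
    have hu2S : (Sum.inr ⟨u2, ⟨hu2f, hu2v⟩⟩ : GlueV f1 f2 v2) ∉ S := by
      intro hmem
      have hone : ∀ w, GG.Adj (Sum.inr ⟨u2, ⟨hu2f, hu2v⟩⟩) w → w ∉ S →
          ∃ c : {x : V₂ // x ≠ f2 ∧ x ≠ v2}, w = Sum.inr c ∧ Γ2.Adj u2 c.1 ∧ c.1 ≠ v2 := by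
        rintro (c | c) hadj hwS
        · exfalso
          have h := glue_adj_inr_inl.mp hadj
          have : (Sum.inl c : GlueV f1 f2 v2) = Sum.inl ⟨v1, hne1⟩ := by
            rw [Sum.inl.injEq]; exact Subtype.ext h.1
          exact hwS (by rw [this]; exact hvS)
        · exact ⟨c, rfl, glue_adj_inr_inr.mp hadj, c.2.2⟩
      have hle := le_numComp_erase GG S hmem ?_
      · exact absurd (hdec _ hmem) (not_lt.mpr hle)
      · intro y z hy hz hyS hzS
        obtain ⟨cy, rfl, hcy, hcyv⟩ := hone y hy hyS
        obtain ⟨cz, rfl, hcz, hczv⟩ := hone z hz hzS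
        rw [Sum.inr.injEq]
        exact Subtype.ext (deg_two_unique hu2deg hu2adj.symm cy.1 cz.1 hcy hcz hcyv hczv)
    have hu1L : u1 ∉ leftPart S := fun h => hu1S (mem_leftPart_iff.mp h)
    have hu2R : u2 ∉ rightPart v1 S := fun h => hu2S (mem_rightPart_iff.mp h)
    -- leftPart is a cut set of Γ1
    have hcut1 : IsCutSet Γ1 (leftPart S) := by
      right
      refine ⟨Finset.ne_empty_of_mem hv1L, fun i hi => ?_⟩
      by_cases hiv : i = v1
      · subst hiv
        exact erase_v_lt Γ1 hf1T hv1L hu1L ha1.symm hu1adj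
          (fun h => hu1f h.symm) huniq1
      · have hif : i ≠ f1 := fun h => hf1T (h ▸ hi)
        have hzS : (Sum.inl ⟨i, hif⟩ : GlueV f1 f2 v2) ∈ S := mem_leftPart_iff.mp hi
        have hd := hdec _ hzS
        have hvz : (Sum.inl ⟨v1, hne1⟩ : GlueV f1 f2 v2) ∈ S.erase (Sum.inl ⟨i, hif⟩) := by
          refine Finset.mem_erase.mpr ⟨?_, hvS⟩
          intro h
          rw [Sum.inl.injEq] at h
          exact hiv (congrArg Subtype.val h).symm
        have hcS := glue_count_in (Γ1 := Γ1) (Γ2 := Γ2) hne1 hne2 S hvS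
        have hcz := glue_count_in (Γ1 := Γ1) (Γ2 := Γ2) hne1 hne2 _ hvz
        rw [leftPart_erase_inl (⟨i, hif⟩ : {x : V₁ // x ≠ f1}),
          rightPart_erase_inl_ne hne1 hne2 (show (⟨i, hif⟩ : {x : V₁ // x ≠ f1}).1 ≠ v1 from hiv)]
          at hcz
        rw [show ((⟨i, hif⟩ : {x : V₁ // x ≠ f1}) : V₁) = i from rfl] at hcz
        have hL1 : numComp Γ1 (leftPart S) = numComp Γ1 (insert f1 (leftPart S)) + 1 :=
          numComp_insert_of_nbr_mem Γ1 _ hf1T hv1L huniq1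
        have hL2 : numComp Γ1 ((leftPart S).erase i) =
            numComp Γ1 (insert f1 ((leftPart S).erase i)) + 1 :=
          numComp_insert_of_nbr_mem Γ1 _ (fun h => hf1T (Finset.mem_of_mem_erase h))
            (Finset.mem_erase.mpr ⟨fun h => hiv h.symm, hv1L⟩) huniq1
        rw [← hGG] at hcS hcz
        omega
    have hcut2 : IsCutSet Γ2 (rightPart v1 S) := by
      right
      refine ⟨Finset.ne_empty_of_mem hv2R, fun j hj => ?_⟩
      by_cases hjv : j = v2
      · subst hjv
        exact erase_v_lt Γ2 hf2T hv2R hu2R ha2.symm hu2adj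
          (fun h => hu2f h.symm) huniq2
      · have hjf : j ≠ f2 := fun h => hf2T (h ▸ hj)
        have hzS : (Sum.inr ⟨j, ⟨hjf, hjv⟩⟩ : GlueV f1 f2 v2) ∈ S := mem_rightPart_iff.mp hj
        have hd := hdec _ hzS
        have hvz : (Sum.inl ⟨v1, hne1⟩ : GlueV f1 f2 v2) ∈ S.erase (Sum.inr ⟨j, ⟨hjf, hjv⟩⟩) :=
          Finset.mem_erase.mpr ⟨by simp, hvS⟩
        have hcS := glue_count_in (Γ1 := Γ1) (Γ2 := Γ2) hne1 hne2 S hvS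
        have hcz := glue_count_in (Γ1 := Γ1) (Γ2 := Γ2) hne1 hne2 _ hvz
        rw [leftPart_erase_inr (⟨j, ⟨hjf, hjv⟩⟩ : {x : V₂ // x ≠ f2 ∧ x ≠ v2}),
          rightPart_erase_inr hne1 hne2 (⟨j, ⟨hjf, hjv⟩⟩ : {x : V₂ // x ≠ f2 ∧ x ≠ v2})] at hcz
        rw [show ((⟨j, ⟨hjf, hjv⟩⟩ : {x : V₂ // x ≠ f2 ∧ x ≠ v2}) : V₂) = j from rfl] at hcz
        have hR1 : numComp Γ2 (rightPart v1 S) =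
            numComp Γ2 (insert f2 (rightPart v1 S)) + 1 :=
          numComp_insert_of_nbr_mem Γ2 _ hf2T hv2R huniq2
        have hR2 : numComp Γ2 ((rightPart v1 S).erase j) =
            numComp Γ2 (insert f2 ((rightPart v1 S).erase j)) + 1 :=
          numComp_insert_of_nbr_mem Γ2 _ (fun h => hf2T (Finset.mem_of_mem_erase h))
            (Finset.mem_erase.mpr ⟨fun h => hjv h.symm, hv2R⟩) huniq2
        rw [← hGG] at hcS hcz
        omega
    have hn1 := hunmixed1 _ hcut1
    have hn2 := hunmixed2 _ hcut2
    have hcS := glue_count_in (Γ1 := Γ1) (Γ2 := Γ2) hne1 hne2 S hvS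
    rw [← hGG] at hcS
    have hL1 : numComp Γ1 (leftPart S) = numComp Γ1 (insert f1 (leftPart S)) + 1 :=
      numComp_insert_of_nbr_mem Γ1 _ hf1T hv1L huniq1
    have hR1 : numComp Γ2 (rightPart v1 S) = numComp Γ2 (insert f2 (rightPart v1 S)) + 1 :=
      numComp_insert_of_nbr_mem Γ2 _ hf2T hv2R huniq2
    have hcards := card_parts hne1 hne2 S
    rw [if_pos hvS] at hcards
    omega
  · -- v ∉ S
    have hv1L : v1 ∉ leftPart S := fun h => hvS (mem_leftPart_iff.mp h)
    have hv2R : v2 ∉ rightPart v1 S := fun h => hvS ((v2_mem_rightPart_iff hne1).mp h)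
    have hcS := glue_count_out (Γ1 := Γ1) (Γ2 := Γ2) hne1 hne2 S hvS
    rw [← hGG] at hcS
    have hL1 : numComp Γ1 (insert f1 (leftPart S)) = numComp Γ1 (leftPart S) :=
      numComp_insert_of_nbr Γ1 _ hf1T hv1L ha1 huniq1
    have hR1 : numComp Γ2 (insert f2 (rightPart v1 S)) = numComp Γ2 (rightPart v1 S) :=
      numComp_insert_of_nbr Γ2 _ hf2T hv2R ha2 huniq2
    have hcut1 : IsCutSet Γ1 (leftPart S) := by
      by_cases hL0 : leftPart S = ∅
      · exact Or.inl hL0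
      right
      refine ⟨hL0, fun i hi => ?_⟩
      have hif : i ≠ f1 := fun h => hf1T (h ▸ hi)
      have hiv : i ≠ v1 := fun h => hv1L (h ▸ hi)
      have hzS : (Sum.inl ⟨i, hif⟩ : GlueV f1 f2 v2) ∈ S := mem_leftPart_iff.mp hi
      have hS0 : S ≠ ∅ := Finset.ne_empty_of_mem hzS
      have hdec : ∀ z ∈ S, numComp GG (S.erase z) < numComp GG S := by
        rcases hcut with h | ⟨-, h⟩
        · exact absurd h hS0
        · exact h
      have hd := hdec _ hzS
      have hvz : (Sum.inl ⟨v1, hne1⟩ : GlueV f1 f2 v2) ∉ S.erase (Sum.inl ⟨i, hif⟩) :=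
        fun h => hvS (Finset.mem_of_mem_erase h)
      have hcz := glue_count_out (Γ1 := Γ1) (Γ2 := Γ2) hne1 hne2 _ hvz
      rw [leftPart_erase_inl (⟨i, hif⟩ : {x : V₁ // x ≠ f1}),
        rightPart_erase_inl_ne hne1 hne2 (show (⟨i, hif⟩ : {x : V₁ // x ≠ f1}).1 ≠ v1 from hiv)]
        at hcz
      rw [show ((⟨i, hif⟩ : {x : V₁ // x ≠ f1}) : V₁) = i from rfl] at hcz
      have hL2 : numComp Γ1 (insert f1 ((leftPart S).erase i)) =
          numComp Γ1 ((leftPart S).erase i) :=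
        numComp_insert_of_nbr Γ1 _ (fun h => hf1T (Finset.mem_of_mem_erase h))
          (fun h => hv1L (Finset.mem_of_mem_erase h)) ha1 huniq1
      rw [← hGG] at hcz
      omega
    have hcut2 : IsCutSet Γ2 (rightPart v1 S) := by
      by_cases hR0 : rightPart v1 S = ∅
      · exact Or.inl hR0
      right
      refine ⟨hR0, fun j hj => ?_⟩
      have hjf : j ≠ f2 := fun h => hf2T (h ▸ hj)
      have hjv : j ≠ v2 := fun h => hv2R (h ▸ hj)
      have hzS : (Sum.inr ⟨j, ⟨hjf, hjv⟩⟩ : GlueV f1 f2 v2) ∈ S := mem_rightPart_iff.mp hj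
      have hS0 : S ≠ ∅ := Finset.ne_empty_of_mem hzS
      have hdec : ∀ z ∈ S, numComp GG (S.erase z) < numComp GG S := by
        rcases hcut with h | ⟨-, h⟩
        · exact absurd h hS0
        · exact h
      have hd := hdec _ hzS
      have hvz : (Sum.inl ⟨v1, hne1⟩ : GlueV f1 f2 v2) ∉ S.erase (Sum.inr ⟨j, ⟨hjf, hjv⟩⟩) :=
        fun h => hvS (Finset.mem_of_mem_erase h)
      have hcz := glue_count_out (Γ1 := Γ1) (Γ2 := Γ2) hne1 hne2 _ hvz
      rw [leftPart_erase_inr (⟨j, ⟨hjf, hjv⟩⟩ : {x : V₂ // x ≠ f2 ∧ x ≠ v2}),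
        rightPart_erase_inr hne1 hne2 (⟨j, ⟨hjf, hjv⟩⟩ : {x : V₂ // x ≠ f2 ∧ x ≠ v2})] at hcz
      rw [show ((⟨j, ⟨hjf, hjv⟩⟩ : {x : V₂ // x ≠ f2 ∧ x ≠ v2}) : V₂) = j from rfl] at hcz
      have hR2 : numComp Γ2 (insert f2 ((rightPart v1 S).erase j)) =
          numComp Γ2 ((rightPart v1 S).erase j) :=
        numComp_insert_of_nbr Γ2 _ (fun h => hf2T (Finset.mem_of_mem_erase h))
          (fun h => hv2R (Finset.mem_of_mem_erase h)) ha2 huniq2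
      rw [← hGG] at hcz
      omega
    have hn1 := hunmixed1 _ hcut1
    have hn2 := hunmixed2 _ hcut2
    have hcards := card_parts hne1 hne2 S
    rw [if_neg hvS] at hcards
    omega
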